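/- arXiv:q-alg/9507035 — 5 statements merged into one kernel-verified Lean document; each statement's English description precedes it below -/
import Mathlib

section
/- Let M be a real number and let N and j be natural numbers. Then there exist real coefficients c_0, c_1, ..., c_N, depending only on M, N and j, such that for every real polynomial P of degree at most N, the function F : ℝ → ℝ defined by F(x) = e^{Mx} · P(e^x) satisfies F^{(j)}(0) = ∑_{i=0}^{N} c_i · F^{(i)}(0), where F^{(k)} denotes the k-th derivative of F. -/
open Finset

private lemma exp_sum_iteratedDeriv (m : ℕ) (a b : ℕ → ℝ) (n : ℕ) :
    iteratedDeriv n (fun x : ℝ => ∑ k ∈ range m, a k * Real.exp (b k * x)) =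
      fun x : ℝ => ∑ k ∈ range m, a k * (b k) ^ n * Real.exp (b k * x) := by
  induction n with
  | zero => funext x; simp
  | succ n ih =>
    rw [iteratedDeriv_succ, ih]
    funext x
    have h : ∀ k ∈ range m, HasDerivAt (fun x : ℝ => a k * b k ^ n * Real.exp (b k * x))
        (a k * b k ^ (n + 1) * Real.exp (b k * x)) x := by
      intro k _
      have h1 : HasDerivAt (fun x : ℝ => b k * x) (b k) x := by
        simpa using (hasDerivAt_id x).const_mul (b k)
      have h2 := (h1.exp).const_mul (a k * b k ^ n)
      refine h2.congr_deriv ?_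
      ring
    exact (HasDerivAt.fun_sum h).deriv

private lemma interp_exists (M : ℝ) (N j : ℕ) :
    ∃ c : ℕ → ℝ, ∀ k ∈ range (N + 1),
      (M + k) ^ j = ∑ i ∈ range (N + 1), c i * (M + k) ^ i := by
  have hvinj : Set.InjOn (fun k : ℕ => M + (k : ℝ)) (range (N + 1)) := by
    intro x _ y _ h
    have : (x : ℝ) = y := by simpa using h
    exact_mod_cast this
  set Q := Lagrange.interpolate (range (N + 1)) (fun k : ℕ => M + (k : ℝ))
    (fun k : ℕ => (M + (k : ℝ)) ^ j) with hQ
  have hdeg : Q.natDegree < N + 1 := by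
    rcases eq_or_ne Q 0 with h0 | h0
    · simp [h0]
    · have := Lagrange.degree_interpolate_lt (fun k : ℕ => (M + (k : ℝ)) ^ j) hvinj
      rw [← hQ] at this
      have hcard : (range (N + 1)).card = N + 1 := by simp
      rw [hcard] at this
      exact (Polynomial.natDegree_lt_iff_degree_lt h0).2 (by exact_mod_cast this)
  refine ⟨fun i => Q.coeff i, fun k hk => ?_⟩
  have heval : Q.eval (M + (k : ℝ)) = (M + (k : ℝ)) ^ j :=
    Lagrange.eval_interpolate_at_node _ hvinj hk
  rw [← heval, Polynomial.eval_eq_sum_range' hdeg]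

/-- For `M : ℝ` and naturals `N`, `j`, there exist coefficients
`c 0, …, c N` (depending only on `M`, `N`, `j`) such that for every real polynomial
`P` of degree at most `N`, the function `F x = e^{M x} * P (e^x)` satisfies
`F^{(j)}(0) = ∑_{i=0}^{N} c i * F^{(i)}(0)`. -/
theorem stmt_0 (M : ℝ) (N j : ℕ) :
    ∃ c : ℕ → ℝ, ∀ P : Polynomial ℝ, P.natDegree ≤ N →
      iteratedDeriv j (fun x : ℝ => Real.exp (M * x) * P.eval (Real.exp x)) 0 =
        ∑ i ∈ Finset.range (N + 1),
          c i * iteratedDeriv i (fun x : ℝ => Real.exp (M * x) * P.eval (Real.exp x)) 0 := by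
  obtain ⟨c, hc⟩ := interp_exists M N j
  refine ⟨c, fun P hP => ?_⟩
  have hF : (fun x : ℝ => Real.exp (M * x) * P.eval (Real.exp x)) =
      fun x : ℝ => ∑ k ∈ range (N + 1), P.coeff k * Real.exp ((M + k) * x) := by
    funext x
    rw [Polynomial.eval_eq_sum_range' (Nat.lt_succ_of_le hP), Finset.mul_sum]
    refine Finset.sum_congr rfl fun k _ => ?_
    rw [← Real.exp_nat_mul, add_mul, Real.exp_add]
    ring
  have key : ∀ n : ℕ, iteratedDeriv n
      (fun x : ℝ => Real.exp (M * x) * P.eval (Real.exp x)) 0 =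
      ∑ k ∈ range (N + 1), P.coeff k * (M + k) ^ n := by
    intro n
    rw [hF, exp_sum_iteratedDeriv]
    simp
  rw [key]
  have : ∀ i ∈ range (N + 1), c i * iteratedDeriv i
      (fun x : ℝ => Real.exp (M * x) * P.eval (Real.exp x)) 0 =
      c i * ∑ k ∈ range (N + 1), P.coeff k * (M + k) ^ i := fun i _ => by rw [key]
  rw [Finset.sum_congr rfl this]
  calc ∑ k ∈ range (N + 1), P.coeff k * (M + k) ^ j
      = ∑ k ∈ range (N + 1), ∑ i ∈ range (N + 1), c i * (P.coeff k * (M + k) ^ i) := by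
        refine Finset.sum_congr rfl fun k hk => ?_
        rw [hc k hk, Finset.mul_sum]
        refine Finset.sum_congr rfl fun i _ => by ring
    _ = ∑ i ∈ range (N + 1), c i * ∑ k ∈ range (N + 1), P.coeff k * (M + k) ^ i := by
        rw [Finset.sum_comm]
        exact Finset.sum_congr rfl fun i _ => (Finset.mul_sum _ _ _).symm
end

section
/- Let M be a real number and let N and j be natural numbers. Then there exist real coefficients c_0, c_1, ..., c_N, depending only on M, N and j, such that for every choice of real numbers a_0, a_1, ..., a_N, the function G : ℝ → ℝ defined by G(x) = ∑_{n=0}^{N} a_n · e^{(M+n)x} satisfies G^{(j)}(0) = ∑_{i=0}^{N} c_i · G^{(i)}(0), where G^{(k)} denotes the k-th derivative of G. -/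
open Finset

lemma iter_deriv_exp_sum (M : ℝ) (N : ℕ) (a : ℕ → ℝ) (k : ℕ) :
    iteratedDeriv k
        (fun x : ℝ => ∑ n ∈ Finset.range (N + 1), a n * Real.exp ((M + n) * x)) =
      fun x : ℝ => ∑ n ∈ Finset.range (N + 1),
        a n * (M + n) ^ k * Real.exp ((M + n) * x) := by
  induction k with
  | zero => simp
  | succ k ih =>
    rw [iteratedDeriv_succ, ih]
    funext x
    have : HasDerivAt (fun x : ℝ => ∑ n ∈ Finset.range (N + 1),
        a n * (M + n) ^ k * Real.exp ((M + n) * x))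
        (∑ n ∈ Finset.range (N + 1),
          a n * (M + n) ^ (k + 1) * Real.exp ((M + n) * x)) x := by
      apply HasDerivAt.fun_sum
      intro n _
      have h1 : HasDerivAt (fun x : ℝ => Real.exp ((M + n) * x))
          (Real.exp ((M + n) * x) * (M + n)) x := by
        simpa [Function.comp_def] using (Real.hasDerivAt_exp ((M + n) * x)).comp x
          ((hasDerivAt_id x).const_mul (M + (n : ℝ)))
      have := h1.const_mul (a n * (M + n) ^ k)
      convert this using 1
      · rfl
      ring
    exact this.deriv

/-- For `M : ℝ` and naturals `N`, `j`, there exist coefficients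
`c 0, …, c N` (depending only on `M`, `N`, `j`) such that for all real numbers
`a 0, …, a N`, the function `G x = ∑_{n=0}^{N} a n * e^{(M+n) x}` satisfies
`G^{(j)}(0) = ∑_{i=0}^{N} c i * G^{(i)}(0)`. -/
theorem stmt_1 (M : ℝ) (N j : ℕ) :
    ∃ c : ℕ → ℝ, ∀ a : ℕ → ℝ,
      iteratedDeriv j
          (fun x : ℝ => ∑ n ∈ Finset.range (N + 1), a n * Real.exp ((M + n) * x)) 0 =
        ∑ i ∈ Finset.range (N + 1),
          c i * iteratedDeriv i
            (fun x : ℝ => ∑ n ∈ Finset.range (N + 1), a n * Real.exp ((M + n) * x)) 0 := by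
  classical
  set v : ℕ → ℝ := fun n => M + n with hv
  have hinj : Set.InjOn v (Finset.range (N + 1)) := by
    intro x _ y _ h
    have : (x : ℝ) = y := by
      have := h
      simp only [hv] at this
      linarith
    exact_mod_cast this
  set p : Polynomial ℝ :=
    Lagrange.interpolate (Finset.range (N + 1)) v (fun n => v n ^ j) with hp
  refine ⟨fun i => p.coeff i, fun a => ?_⟩
  have hnode : ∀ n ∈ Finset.range (N + 1), p.eval (v n) = v n ^ j := fun n hn =>
    Lagrange.eval_interpolate_at_node _ hinj hn
  have hdeg : p.natDegree < N + 1 := by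
    have := Lagrange.degree_interpolate_lt (fun n => v n ^ j) hinj
    rw [← hp] at this
    simp only [Finset.card_range] at this
    by_cases h : p = 0
    · simp [h]
    · exact (Polynomial.natDegree_lt_iff_degree_lt h).2 (by exact_mod_cast this)
  have heval : ∀ x : ℝ, p.eval x = ∑ i ∈ Finset.range (N + 1), p.coeff i * x ^ i :=
    fun x => Polynomial.eval_eq_sum_range' hdeg x
  simp only [iter_deriv_exp_sum, mul_zero, Real.exp_zero, mul_one]
  have key : ∀ n ∈ Finset.range (N + 1),
      a n * v n ^ j = ∑ i ∈ Finset.range (N + 1), p.coeff i * (a n * v n ^ i) := by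
    intro n hn
    rw [← hnode n hn, heval, Finset.mul_sum]
    exact Finset.sum_congr rfl fun i _ => by ring
  calc ∑ n ∈ Finset.range (N + 1), a n * v n ^ j
      = ∑ n ∈ Finset.range (N + 1), ∑ i ∈ Finset.range (N + 1),
          p.coeff i * (a n * v n ^ i) := Finset.sum_congr rfl key
    _ = ∑ i ∈ Finset.range (N + 1),
          p.coeff i * ∑ n ∈ Finset.range (N + 1), a n * v n ^ i := by
        rw [Finset.sum_comm]; simp [Finset.mul_sum]
end

section
/- Let M be a real number, N a natural number, and P a real polynomial of degree at most N. Define F : ℝ → ℝ by F(x) = e^{Mx} · P(e^x). If F^{(k)}(0) = 0 for every k with 0 ≤ k ≤ N, then P is the zero polynomial. -/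
open Finset

lemma my_iteratedDeriv_sum {n : ℕ} {ι : Type*} (u : Finset ι) (f : ι → ℝ → ℝ)
    (h : ∀ j ∈ u, ContDiff ℝ n (f j)) (x : ℝ) :
    iteratedDeriv n (fun y => ∑ j ∈ u, f j y) x = ∑ j ∈ u, iteratedDeriv n (f j) x := by
  simp only [iteratedDeriv]
  rw [iteratedFDeriv_sum h]
  simp

lemma my_iteratedDeriv_const_mul {n : ℕ} (a c : ℝ) (x : ℝ) :
    iteratedDeriv n (fun y : ℝ => a * Real.exp (c * y)) x = a * c ^ n * Real.exp (c * x) := by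
  have hc : ContDiff ℝ n (fun y : ℝ => Real.exp (c * y)) := by fun_prop
  have h1 : iteratedDeriv n (fun y : ℝ => a * Real.exp (c * y)) x =
      a * iteratedDeriv n (fun y : ℝ => Real.exp (c * y)) x := by
    simp only [← iteratedDerivWithin_univ]
    exact iteratedDerivWithin_const_mul (Set.mem_univ x) uniqueDiffOn_univ a hc.contDiffWithinAt
  rw [h1, iteratedDeriv_exp_const_mul]
  ring

/-- If `P` is a real polynomial of degree at most `N`,
`F x = e^{M x} * P (e^x)`, and `F^{(k)}(0) = 0` for all `k ≤ N`,
then `P` is the zero polynomial. -/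
theorem stmt_2 (M : ℝ) (N : ℕ) (P : Polynomial ℝ) (hP : P.natDegree ≤ N)
    (h : ∀ k ≤ N,
      iteratedDeriv k (fun x : ℝ => Real.exp (M * x) * P.eval (Real.exp x)) 0 = 0) :
    P = 0 := by
  have hFeq : (fun x : ℝ => Real.exp (M * x) * P.eval (Real.exp x)) =
      fun x : ℝ => ∑ j : Fin (N + 1), P.coeff j * Real.exp ((M + (j : ℕ)) * x) := by
    funext x
    rw [Polynomial.eval_eq_sum_range' (Nat.lt_succ_of_le hP), Finset.mul_sum,
      Fin.sum_univ_eq_sum_range (fun i => P.coeff i * Real.exp ((M + i) * x)) (N + 1)]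
    refine Finset.sum_congr rfl fun j _ => ?_
    rw [add_mul, Real.exp_add, Real.exp_nat_mul]
    ring
  have key : ∀ k ≤ N,
      ∑ j : Fin (N + 1), P.coeff j * (M + (j : ℕ)) ^ k = 0 := by
    intro k hk
    have hh := h k hk
    rw [hFeq, my_iteratedDeriv_sum _ _ (fun j _ => by fun_prop) 0] at hh
    simp_rw [my_iteratedDeriv_const_mul, mul_zero, Real.exp_zero, mul_one] at hh
    exact hh
  have hv : (fun j : Fin (N + 1) => P.coeff j) = 0 := by
    apply Matrix.eq_zero_of_forall_pow_sum_mul_pow_eq_zero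
      (f := fun j : Fin (N + 1) => M + (j : ℕ))
    · intro a b hab
      have h2 : ((a : ℕ) : ℝ) = ((b : ℕ) : ℝ) := by
        have := hab
        simp only at this
        linarith
      exact Fin.ext (Nat.cast_injective h2)
    · intro i
      exact key i (Nat.lt_succ_iff.mp i.isLt)
  ext n
  rcases le_or_gt n N with hn | hn
  · have := congrFun hv ⟨n, Nat.lt_succ_of_le hn⟩
    simpa using this
  · simp [Polynomial.coeff_eq_zero_of_natDegree_lt (lt_of_le_of_lt hP hn)]
end

section
/- Let M be a real number, N a natural number, and P a real polynomial of degree at most N. Define F : ℝ → ℝ by F(x) = e^{Mx} · P(e^x). If F^{(k)}(0) = 0 for every k with 0 ≤ k ≤ N, then F(x) = 0 for all real x. -/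
open Finset Real

lemma exp_deriv_aux (c : ℝ) (x : ℝ) :
    HasDerivAt (fun x : ℝ => Real.exp (c * x)) (c * Real.exp (c * x)) x := by
  simpa [mul_comm] using ((hasDerivAt_id x).const_mul c).exp

lemma stmt3_aux (M : ℝ) (N : ℕ) (a : ℕ → ℝ) :
    ∀ k, iteratedDeriv k
      (fun x : ℝ => ∑ i ∈ Finset.range (N + 1), a i * Real.exp ((M + i) * x))
      = fun x : ℝ =>
        ∑ i ∈ Finset.range (N + 1), a i * ((M + i) ^ k * Real.exp ((M + i) * x)) := by
  intro k
  induction k with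
  | zero => simp
  | succ k ih =>
      rw [iteratedDeriv_succ, ih]
      funext x
      rw [deriv_fun_sum]
      · apply Finset.sum_congr rfl
        intro i _
        have : HasDerivAt (fun x : ℝ => a i * ((M + i) ^ k * Real.exp ((M + i) * x)))
            (a i * ((M + i) ^ (k + 1) * Real.exp ((M + i) * x))) x := by
          have := ((exp_deriv_aux (M + i) x).const_mul ((M + i) ^ k)).const_mul (a i)
          exact this.congr_deriv (by ring)
        exact this.deriv
      · intro i _
        exact (((exp_deriv_aux (M + i) x).const_mul ((M + i) ^ k)).const_mul (a i)).differentiableAt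

/-- If `P` is a real polynomial of degree at most `N`,
`F x = e^{M x} * P (e^x)`, and `F^{(k)}(0) = 0` for all `k ≤ N`,
then `F` vanishes identically. -/
theorem stmt_3 (M : ℝ) (N : ℕ) (P : Polynomial ℝ) (hP : P.natDegree ≤ N)
    (h : ∀ k ≤ N,
      iteratedDeriv k (fun x : ℝ => Real.exp (M * x) * P.eval (Real.exp x)) 0 = 0) :
    ∀ x : ℝ, Real.exp (M * x) * P.eval (Real.exp x) = 0 := by
  set a : ℕ → ℝ := fun i => P.coeff i with ha
  have hF : (fun x : ℝ => Real.exp (M * x) * P.eval (Real.exp x))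
      = fun x : ℝ => ∑ i ∈ Finset.range (N + 1), a i * Real.exp ((M + i) * x) := by
    funext x
    rw [Polynomial.eval_eq_sum_range' (Nat.lt_succ_of_le hP), Finset.mul_sum]
    apply Finset.sum_congr rfl
    intro i _
    rw [show (M + (i:ℝ)) * x = M * x + i * x by ring, Real.exp_add, Real.exp_nat_mul]
    ring
  -- derivative values at 0
  have key : ∀ k ≤ N, ∑ i ∈ Finset.range (N + 1), a i * (M + i) ^ k = 0 := by
    intro k hk
    have := h k hk
    rw [hF, stmt3_aux] at this
    simpa using this
  -- Vandermonde
  set v : Fin (N + 1) → ℝ := fun i => M + i with hv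
  have hvinj : Function.Injective v := by
    intro i j hij
    have : (i : ℝ) = (j : ℝ) := by
      have := hij; simp only [hv] at this; linarith
    exact Fin.ext (by exact_mod_cast this)
  set A : Matrix (Fin (N + 1)) (Fin (N + 1)) ℝ := (Matrix.vandermonde v).transpose with hA
  have hdet : A.det ≠ 0 := by
    rw [hA, Matrix.det_transpose, Matrix.det_vandermonde_ne_zero_iff]
    exact hvinj
  set b : Fin (N + 1) → ℝ := fun i => a i with hb
  have hmul : A.mulVec b = 0 := by
    funext k
    have hk := key (k : ℕ) (Nat.lt_succ_iff.mp k.isLt)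
    rw [← Fin.sum_univ_eq_sum_range (fun i => a i * (M + i) ^ (k : ℕ))] at hk
    simp only [hA, Matrix.mulVec, dotProduct, Matrix.transpose_apply,
      Matrix.vandermonde, Pi.zero_apply, hb, hv, Matrix.of_apply]
    rw [← hk]
    apply Finset.sum_congr rfl
    intro i _
    ring
  have hbz : b = 0 := by
    have hinj : Function.Injective A.mulVec :=
      Matrix.mulVec_injective_iff_isUnit.2 ((Matrix.isUnit_iff_isUnit_det A).2 hdet.isUnit)
    apply hinj
    rw [hmul, Matrix.mulVec_zero]
  have haz : ∀ i ∈ Finset.range (N + 1), a i = 0 := by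
    intro i hi
    have : b ⟨i, Finset.mem_range.mp hi⟩ = 0 := by rw [hbz]; rfl
    simpa [hb] using this
  intro x
  rw [congrFun hF x]
  exact Finset.sum_eq_zero fun i hi => by rw [haz i hi, zero_mul]
end

section
/- Let N be a natural number and let M be an integer with -N ≤ M ≤ 0. Let P be a real polynomial of degree at most N, and define F : ℝ → ℝ by F(x) = e^{Mx} · P(e^x). If F(0) = 1 and F^{(k)}(0) = 0 for all k with 1 ≤ k ≤ N, then F(x) = 1 for all real x. -/
open Finset

lemma iter_sum_exp (n : ℕ) (a c : ℕ → ℝ) (k : ℕ) :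
    iteratedDeriv k (fun x : ℝ => ∑ i ∈ range n, a i * Real.exp (c i * x))
      = fun x => ∑ i ∈ range n, a i * c i ^ k * Real.exp (c i * x) := by
  induction k with
  | zero => simp
  | succ k ih =>
    rw [iteratedDeriv_succ, ih]
    funext x
    have : ∀ i ∈ range n, HasDerivAt (fun x => a i * c i ^ k * Real.exp (c i * x))
        (a i * c i ^ (k + 1) * Real.exp (c i * x)) x := by
      intro i _
      have h1 : HasDerivAt (fun x : ℝ => c i * x) (c i) x := by
        simpa using (hasDerivAt_id x).const_mul (c i)
      have h2 := (Real.hasDerivAt_exp (c i * x)).comp x h1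
      have h3 : HasDerivAt (fun x => a i * c i ^ k * Real.exp (c i * x))
          (a i * c i ^ k * (Real.exp (c i * x) * c i)) x := h2.const_mul (a i * c i ^ k)
      convert h3 using 1
      ring
    exact (HasDerivAt.fun_sum this).deriv

/-- Let `N : ℕ` and `M : ℤ` with `-N ≤ M ≤ 0`, let `P` be a real
polynomial of degree at most `N`, and let `F x = e^{M x} * P (e^x)`.
If `F(0) = 1` and `F^{(k)}(0) = 0` for `1 ≤ k ≤ N`, then `F x = 1` for all `x`. -/
theorem stmt_10 (N : ℕ) (M : ℤ) (hM₁ : -(N : ℤ) ≤ M) (hM₂ : M ≤ 0)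
    (P : Polynomial ℝ) (hP : P.natDegree ≤ N)
    (h0 : Real.exp ((M : ℝ) * 0) * P.eval (Real.exp 0) = 1)
    (h : ∀ k, 1 ≤ k → k ≤ N →
      iteratedDeriv k (fun x : ℝ => Real.exp ((M : ℝ) * x) * P.eval (Real.exp x)) 0 = 0) :
    ∀ x : ℝ, Real.exp ((M : ℝ) * x) * P.eval (Real.exp x) = 1 := by
  set c : ℕ → ℝ := fun i => (M : ℝ) + i with hc
  -- the special index where the exponent is 0
  set i₀ : ℕ := (-M).toNat with hi₀
  have hi₀le : i₀ ≤ N := by omega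
  have hci₀ : c i₀ = 0 := by
    simp only [hc, hi₀]
    have h1 : ((-M).toNat : ℤ) = -M := Int.toNat_of_nonneg (by omega)
    have h2 : ((((-M).toNat : ℤ)) : ℝ) = -(M : ℝ) := by exact_mod_cast congrArg (Int.cast : ℤ → ℝ) h1
    push_cast at h2 ⊢
    linarith
  have hcinj : ∀ i j : ℕ, c i = c j → i = j := by
    intro i j hij
    simp only [hc] at hij
    exact_mod_cast Nat.cast_injective (add_left_cancel hij)
  -- F as a sum of exponentials
  have hF : ∀ x : ℝ, Real.exp ((M : ℝ) * x) * P.eval (Real.exp x)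
      = ∑ i ∈ range (N + 1), P.coeff i * Real.exp (c i * x) := by
    intro x
    rw [Polynomial.eval_eq_sum_range' (Nat.lt_succ_of_le hP), Finset.mul_sum]
    refine Finset.sum_congr rfl fun i _ => ?_
    rw [← Real.exp_nat_mul, mul_comm (Real.exp ((M:ℝ)*x)), mul_assoc, ← Real.exp_add]
    simp only [hc]
    ring_nf
  -- derivatives at 0
  have hder : ∀ k : ℕ, iteratedDeriv k
      (fun x : ℝ => Real.exp ((M : ℝ) * x) * P.eval (Real.exp x)) 0
      = ∑ i ∈ range (N + 1), P.coeff i * c i ^ k := by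
    intro k
    have : (fun x : ℝ => Real.exp ((M : ℝ) * x) * P.eval (Real.exp x))
        = fun x => ∑ i ∈ range (N + 1), P.coeff i * Real.exp (c i * x) := funext hF
    rw [this, iter_sum_exp]
    simp
  -- the indicator vector
  set d : ℕ → ℝ := fun i => if i = i₀ then 1 else 0 with hd
  have hdsum : ∀ k : ℕ, ∑ i ∈ range (N + 1), d i * c i ^ k = (0 : ℝ) ^ k := by
    intro k
    rw [Finset.sum_eq_single i₀]
    · simp [hd, hci₀]
    · intro b _ hb; simp [hd, hb]
    · intro hmem; exact absurd (Finset.mem_range.mpr (Nat.lt_succ_of_le hi₀le)) hmem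
  -- all moments of the difference vanish
  have hmom : ∀ k : ℕ, k ≤ N →
      ∑ i ∈ range (N + 1), (P.coeff i - d i) * c i ^ k = 0 := by
    intro k hk
    have : ∑ i ∈ range (N + 1), (P.coeff i - d i) * c i ^ k
        = (∑ i ∈ range (N + 1), P.coeff i * c i ^ k)
          - ∑ i ∈ range (N + 1), d i * c i ^ k := by
      rw [← Finset.sum_sub_distrib]
      exact Finset.sum_congr rfl fun i _ => by ring
    rw [this, hdsum]
    rcases Nat.eq_zero_or_pos k with rfl | hkpos
    · have := hder 0
      simp only [iteratedDeriv_zero] at this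
      rw [← this, h0]
      norm_num
    · rw [← hder k, h k hkpos hk]
      rw [zero_pow (Nat.pos_iff_ne_zero.mp hkpos)]
      ring
  -- Vandermonde: the coefficient vector equals the indicator
  have hv : ∀ i : Fin (N + 1), P.coeff i - d i = 0 := by
    have key := Matrix.eq_zero_of_forall_pow_sum_mul_pow_eq_zero
      (R := ℝ) (n := N + 1) (f := fun j : Fin (N + 1) => c j)
      (v := fun j : Fin (N + 1) => P.coeff j - d j)
      (fun i j hij => Fin.ext (hcinj i j hij))
      (fun i => by
        rw [Fin.sum_univ_eq_sum_range (fun j => (P.coeff j - d j) * c j ^ (i : ℕ))]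
        exact hmom i (Nat.lt_succ_iff.mp i.isLt))
    intro i
    exact congrFun key i
  have hcoeff : ∀ i, i ≤ N → P.coeff i = d i := by
    intro i hi
    have := hv ⟨i, Nat.lt_succ_of_le hi⟩
    simpa [sub_eq_zero] using this
  intro x
  rw [hF x]
  have : ∀ i ∈ range (N + 1), P.coeff i * Real.exp (c i * x)
      = d i * Real.exp (c i * x) := by
    intro i hi
    rw [hcoeff i (Nat.lt_succ_iff.mp (Finset.mem_range.mp hi))]
  rw [Finset.sum_congr rfl this, Finset.sum_eq_single i₀]
  · simp [hd, hci₀]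
  · intro b _ hb; simp [hd, hb]
  · intro hmem; exact absurd (Finset.mem_range.mpr (Nat.lt_succ_of_le hi₀le)) hmem
end
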